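/- Combinatorial construction lemma: Fix n ∈ ℕ and r_{-n}, …, r_n ∈ [0,1]. Define, for k = 1,…,2^{2n}, words v^k ∈ {0,1}^{2n+1} by v^k_ℓ = 1 iff r_ℓ − (k−1)2^{−2n} ∈ (0,1], and let C_n ⊆ {0,1}^{4n+1} consist of the 2^{2n} words w^k_1…w^k_{2n} interleaved with v^k (one for each element w^k of an enumeration of {0,1}^{2n}). Then |C_n| = 2^{2n} and for each ℓ₀ ∈ [−n, n], | |{u ∈ C_n : u_{ℓ₀} = 1}| / |C_n| − r_{ℓ₀} | ≤ 2^{−2n}. -/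

import Mathlib

open Filter Topology

noncomputable section

variable (n : ℕ) (r : ℤ → ℝ) (w : Fin (2 ^ (2 * n)) ≃ (Fin (2 * n) → Bool))

/-- The word `v^k ∈ {0,1}^{2n+1}` (indexed by `ℓ ∈ [−n,n]`):
`v^k_ℓ = 𝟙_{(0,1]}(r_ℓ − (k−1)2^{−2n})`.  (Here `k` runs through `Fin 2^{2n}`, so `k`
plays the role of `k−1 ∈ {0,…,2^{2n}−1}`.) -/
def vWord (k : Fin (2 ^ (2 * n))) (ℓ : ℤ) : Bool :=
  letI := Classical.propDecidable
  if 0 < r ℓ - (k : ℕ) * ((2 : ℝ) ^ (2 * n))⁻¹ ∧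
      r ℓ - (k : ℕ) * ((2 : ℝ) ^ (2 * n))⁻¹ ≤ 1 then true else false

/-- The word `u^k ∈ {0,1}^{4n+1}` (indexed by `ℓ ∈ [−2n,2n]`, extended by `false`
outside) given by `u^k_{-2n}…u^k_{2n} = w^k_1…w^k_n v^k_{-n}…v^k_n w^k_{n+1}…w^k_{2n}`. -/
def uWord (k : Fin (2 ^ (2 * n))) : ℤ → Bool := fun ℓ =>
  if h1 : -(n : ℤ) ≤ ℓ ∧ ℓ ≤ (n : ℤ) then vWord n r k ℓ
  else if h2 : -(2 * n : ℤ) ≤ ℓ ∧ ℓ < -(n : ℤ) then w k ⟨(ℓ + 2 * n).toNat, by omega⟩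
  else if h3 : (n : ℤ) < ℓ ∧ ℓ ≤ (2 * n : ℤ) then w k ⟨(ℓ - 1).toNat, by omega⟩
  else false

/-- The collection `C_n ⊆ {0,1}^{4n+1}` of the `2^{2n}` interleaved words. -/
def Cwords : Finset (ℤ → Bool) :=
  letI := Classical.decEq (ℤ → Bool)
  Finset.image (uWord n r w) Finset.univ

lemma uWord_left (k) (i : Fin (2 * n)) (hi : (i : ℕ) < n) :
    uWord n r w k ((i : ℤ) - 2 * n) = w k i := by
  unfold uWord
  rw [dif_neg (by push_neg; intro; omega), dif_pos ⟨by omega, by omega⟩]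
  have hfin : (((i : ℕ) : ℤ) - 2 * n + 2 * n).toNat = (i : ℕ) := by omega
  simp only [hfin, Fin.eta]

lemma uWord_right (k) (i : Fin (2 * n)) (hi : n ≤ (i : ℕ)) :
    uWord n r w k ((i : ℤ) + 1) = w k i := by
  have hi2 : (i : ℕ) < 2 * n := i.isLt
  unfold uWord
  rw [dif_neg (by push_neg; intro; omega), dif_neg (by push_neg; intro; omega),
    dif_pos ⟨by omega, by omega⟩]
  have hfin : (((i : ℕ) : ℤ) + 1 - 1).toNat = (i : ℕ) := by omega
  simp only [hfin, Fin.eta]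

lemma uWord_injective : Function.Injective (uWord n r w) := by
  intro k k' h
  apply w.injective
  funext i
  rcases lt_or_ge (i : ℕ) n with hi | hi
  · rw [← uWord_left n r w k i hi, ← uWord_left n r w k' i hi, h]
  · rw [← uWord_right n r w k i hi, ← uWord_right n r w k' i hi, h]

lemma Cwords_card : (Cwords n r w).card = 2 ^ (2 * n) := by
  classical
  rw [Cwords, Finset.card_image_of_injective _ (uWord_injective n r w)]
  simp

/-- Combinatorial construction lemma: `|C_n| = 2^{2n}`, and for each `ℓ₀ ∈ [−n,n]` the
proportion of words in `C_n` whose `ℓ₀`-th entry is `1` differs from `r_{ℓ₀}` by at most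
`2^{−2n}`. -/
theorem Cwords_card_and_ratio (hr : ∀ ℓ, r ℓ ∈ Set.Icc (0 : ℝ) 1) :
    letI := Classical.propDecidable
    (Cwords n r w).card = 2 ^ (2 * n) ∧
    ∀ ℓ₀ : ℤ, -(n : ℤ) ≤ ℓ₀ → ℓ₀ ≤ (n : ℤ) →
      |(((Cwords n r w).filter (fun u => u ℓ₀ = true)).card : ℝ) / ((Cwords n r w).card : ℝ)
        - r ℓ₀| ≤ ((2 : ℝ) ^ (2 * n))⁻¹ := by
  classical
  refine ⟨Cwords_card n r w, fun ℓ₀ h1 h2 => ?_⟩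
  have hP : (0:ℝ) < (2:ℝ) ^ (2 * n) := by positivity
  have hNR : (((2 ^ (2 * n) : ℕ)) : ℝ) = (2 : ℝ) ^ (2 * n) := by push_cast; ring
  have hrl := hr ℓ₀
  set x : ℝ := r ℓ₀ * (2:ℝ) ^ (2 * n) with hx
  have hx0 : 0 ≤ x := mul_nonneg hrl.1 hP.le
  have hx1 : x ≤ (2:ℝ) ^ (2 * n) := by
    calc x ≤ 1 * (2:ℝ) ^ (2 * n) := mul_le_mul_of_nonneg_right hrl.2 hP.le
    _ = _ := one_mul _
  set m : ℕ := (⌈x⌉).toNat with hm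
  have hceil : (⌈x⌉ : ℤ) = (m : ℤ) := by
    rw [hm, Int.toNat_of_nonneg (Int.ceil_nonneg hx0)]
  have hmx : x ≤ (m : ℝ) := by
    rw [show ((m:ℝ)) = ((m : ℤ) : ℝ) by push_cast; ring, ← hceil]
    exact Int.le_ceil x
  have hmx' : (m : ℝ) < x + 1 := by
    rw [show ((m:ℝ)) = ((m : ℤ) : ℝ) by push_cast; ring, ← hceil]
    exact Int.ceil_lt_add_one x
  have hmN : m ≤ 2 ^ (2 * n) := by
    have h' : (⌈x⌉ : ℤ) ≤ ((2 ^ (2 * n) : ℕ) : ℤ) :=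
      Int.ceil_le.2 (by rw [show (((2 ^ (2 * n) : ℕ) : ℤ) : ℝ) = (2:ℝ) ^ (2 * n) by
        push_cast; ring]; exact hx1)
    omega
  have hcount : ((Cwords n r w).filter (fun u => u ℓ₀ = true)).card = m := by
    rw [Cwords, Finset.filter_image,
      Finset.card_image_of_injective _ (uWord_injective n r w)]
    have heq : ∀ k : Fin (2 ^ (2 * n)), (uWord n r w k ℓ₀ = true) ↔ ((k : ℕ) < m) := by
      intro k
      rw [uWord, dif_pos ⟨h1, h2⟩, vWord]
      have hk0 : (0:ℝ) ≤ (k : ℕ) * ((2:ℝ) ^ (2*n))⁻¹ := by positivity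
      have h21 : r ℓ₀ - (k:ℕ) * ((2:ℝ) ^ (2*n))⁻¹ ≤ 1 := by linarith [hrl.2]
      have key : (0 < r ℓ₀ - (k:ℕ) * ((2:ℝ) ^ (2*n))⁻¹) ↔ (((k:ℕ)) : ℝ) < x := by
        rw [sub_pos, show ((k:ℕ):ℝ) * ((2:ℝ) ^ (2*n))⁻¹ = ((k:ℕ):ℝ) / (2:ℝ) ^ (2*n) by ring,
          div_lt_iff₀ hP, hx]
      have key2 : (((k:ℕ)) : ℝ) < x ↔ ((k:ℕ) : ℤ) < ⌈x⌉ := by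
        rw [Int.lt_ceil]; push_cast; rfl
      constructor
      · intro hb
        by_contra hkm
        push_neg at hkm
        have hnot : ¬ ((0 < r ℓ₀ - (k:ℕ) * ((2:ℝ) ^ (2*n))⁻¹) ∧
            r ℓ₀ - (k:ℕ) * ((2:ℝ) ^ (2*n))⁻¹ ≤ 1) := by
          rintro ⟨hc, -⟩
          have := key2.1 (key.1 hc)
          omega
        rw [if_neg hnot] at hb
        exact Bool.false_ne_true hb
      · intro hkm
        rw [if_pos ⟨key.2 (key2.2 (by omega)), h21⟩]
    rw [Finset.filter_congr (fun k _ => by simpa using (heq k))]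
    have himg : Finset.image Fin.val
        (Finset.univ.filter fun k : Fin (2 ^ (2 * n)) => (k:ℕ) < m) = Finset.range m := by
      ext a
      simp only [Finset.mem_image, Finset.mem_filter, Finset.mem_univ, true_and,
        Finset.mem_range]
      constructor
      · rintro ⟨k, hk, rfl⟩; exact hk
      · intro ha; exact ⟨⟨a, lt_of_lt_of_le ha hmN⟩, ha, rfl⟩
    have hc := Finset.card_image_of_injective
      (Finset.univ.filter fun k : Fin (2 ^ (2 * n)) => (k:ℕ) < m) Fin.val_injective
    rw [himg, Finset.card_range] at hc
    exact hc.symm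
  have hcards : (@Finset.filter (ℤ → Bool) (fun u => u ℓ₀ = true)
      (fun a => Classical.propDecidable _) (Cwords n r w)).card = m := by
    rw [← hcount]; congr 1; ext a; simp
  rw [hcards, Cwords_card n r w, hNR]
  have hrx : r ℓ₀ = x / (2:ℝ) ^ (2 * n) := by field_simp [hx]; exact hx.symm
  rw [hrx, abs_le]
  have hinv : ((2:ℝ) ^ (2*n))⁻¹ * (2:ℝ) ^ (2*n) = 1 := inv_mul_cancel₀ hP.ne'
  have hinv0 : (0:ℝ) ≤ ((2:ℝ) ^ (2*n))⁻¹ := by positivity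
  constructor
  · have hd : (0:ℝ) ≤ ((m:ℝ) - x) / (2:ℝ) ^ (2*n) := div_nonneg (by linarith) hP.le
    rw [div_sub_div_same]
    linarith
  · rw [div_sub_div_same, div_le_iff₀ hP]
    linarith
end
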